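/- For every n and every ω ∈ Ω_n = {0,1,2}^n, there exists k ≥ 0 such that Z^k(ω) = Z^{k+1}(ω); consequently the stabilization time T_n(ω) = min{k ≥ 0 : Z^k(ω) = Z^{k+1}(ω)} is finite, and the string Z^{T_n(ω)}(ω) is sorted in non-increasing order. -/
import Mathlib


open MeasureTheory ProbabilityTheory Filter Topology

namespace TASEP

/-- Extension of a string `ω ∈ {0,1,2}ⁿ` to all integer indices (0-based), with the
boundary convention that out-of-range entries on the left are `2` and on the right are `0`
(so that the boundary inequalities in the update rule are automatically satisfied, and
no out-of-range pair is ever swapped). -/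
def extStr (n : ℕ) (ω : Fin n → Fin 3) (i : ℤ) : Fin 3 :=
  if h : 0 ≤ i ∧ i < n then ω ⟨i.toNat, by omega⟩
  else if i < 0 then 2 else 0

/-- The (1-based) `i`-th entry of the string `ω`. -/
def entry (n : ℕ) (ω : Fin n → Fin 3) (i : ℕ) : Fin 3 := extStr n ω ((i : ℤ) - 1)

/-- Whether the (0-based) pair of positions `(i, i+1)` is swapped by the three-type
evolution step: either the generic rule `ω_{i-1} ≥ ω_i < ω_{i+1} ≥ ω_{i+2}` (out-of-range
inequalities considered satisfied), or the priority rule: in the pattern `012` the pair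
`12` swaps (into `021`). -/
def swapPair (n : ℕ) (ω : Fin n → Fin 3) (i : ℤ) : Bool :=
  decide ((extStr n ω i < extStr n ω (i+1) ∧ extStr n ω i ≤ extStr n ω (i-1) ∧
      extStr n ω (i+2) ≤ extStr n ω (i+1))
    ∨ (extStr n ω (i-1) = 0 ∧ extStr n ω i = 1 ∧ extStr n ω (i+1) = 2))

/-- The three-type parallel evolution step `Z` on `{0,1,2}ⁿ`. -/
def Zstep (n : ℕ) (ω : Fin n → Fin 3) : Fin n → Fin 3 := fun j =>
  if swapPair n ω j then extStr n ω ((j : ℤ) + 1)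
  else if swapPair n ω ((j : ℤ) - 1) then extStr n ω ((j : ℤ) - 1)
  else ω j

/-- Whether the (0-based) pair `(i, i+1)` forms the pattern `02` (two-type step). -/
def swapPair2 (n : ℕ) (ω : Fin n → Fin 3) (i : ℤ) : Bool :=
  decide (extStr n ω i = 0 ∧ extStr n ω (i+1) = 2)

/-- The two-type parallel evolution step `Z⁽²⁾`, replacing every occurrence of the
substring `02` by `20` (strings over `{0,2}` are realized inside `{0,1,2}ⁿ`). -/
def Z2step (n : ℕ) (ω : Fin n → Fin 3) : Fin n → Fin 3 := fun j =>
  if swapPair2 n ω j then extStr n ω ((j : ℤ) + 1)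
  else if swapPair2 n ω ((j : ℤ) - 1) then extStr n ω ((j : ℤ) - 1)
  else ω j

/-- Stabilization time of `ω` under repeated application of the step `Zf`:
`min {k ≥ 0 : Zf^[k] ω = Zf^[k+1] ω}` (`sInf`, which is `0` if no such `k` exists). -/
noncomputable def stabTime (n : ℕ) (Zf : (Fin n → Fin 3) → (Fin n → Fin 3))
    (ω : Fin n → Fin 3) : ℕ :=
  sInf {k | Zf^[k] ω = Zf^[k + 1] ω}

/-- The two-type stabilization time `T_n^{(2)}`. -/
noncomputable def T2 (n : ℕ) (ω : Fin n → Fin 3) : ℕ := stabTime n (Z2step n) ω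

/-- The three-type stabilization time `T_n`. -/
noncomputable def T3 (n : ℕ) (ω : Fin n → Fin 3) : ℕ := stabTime n (Zstep n) ω

/-- The projection `Π₁`, replacing each `1` by `0`. -/
def proj1 (n : ℕ) (ω : Fin n → Fin 3) : Fin n → Fin 3 := fun j => if ω j = 2 then 2 else 0

/-- The excess `E_n(ω) = T_n(ω) - T_n^{(2)}(Π₁ ω)` (as an integer). -/
noncomputable def excess (n : ℕ) (ω : Fin n → Fin 3) : ℤ :=
  (T3 n ω : ℤ) - (T2 n (proj1 n ω) : ℤ)

/-- The Bernoulli measure on one letter: `2` with probability `p`, `0` with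
probability `1 - p`. -/
noncomputable def bern3 (p : ℝ) : Measure (Fin 3) :=
  ENNReal.ofReal (1 - p) • Measure.dirac 0 + ENNReal.ofReal p • Measure.dirac 2

/-- The Bernoulli product measure of parameter `p` on strings of length `n`
(supported on two-type strings `{0,2}ⁿ`). -/
noncomputable def bernString (n : ℕ) (p : ℝ) : Measure (Fin n → Fin 3) :=
  Measure.pi fun _ => bern3 p

variable {n : ℕ} {ω : Fin n → Fin 3}

lemma extStr_fin (j : Fin n) : extStr n ω ((j : ℤ)) = ω j := by
  rw [extStr, dif_pos ⟨Int.natCast_nonneg _, by exact_mod_cast j.isLt⟩]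
  exact congrArg ω (Fin.ext (by simp))

lemma extStr_neg {i : ℤ} (h : i < 0) : extStr n ω i = 2 := by
  rw [extStr, dif_neg (by omega), if_pos h]

lemma extStr_ge {i : ℤ} (h : (n:ℤ) ≤ i) : extStr n ω i = 0 := by
  have : ¬ i < 0 := by
    have := Int.natCast_nonneg n; omega
  rw [extStr, dif_neg (by omega), if_neg this]

lemma aux_adj : ∀ a b c d e : Fin 3,
    ((b < c ∧ b ≤ a ∧ d ≤ c) ∨ (a = 0 ∧ b = 1 ∧ c = 2)) →
    ¬((c < d ∧ c ≤ b ∧ e ≤ d) ∨ (b = 0 ∧ c = 1 ∧ d = 2)) := by decide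

lemma swap_not_adj {i : ℤ} (h : swapPair n ω i = true) : swapPair n ω (i+1) = false := by
  rw [swapPair, decide_eq_true_eq] at h
  rw [swapPair, decide_eq_false_iff_not]
  have e1 : i + 1 - 1 = i := by ring
  have e2 : i + 1 + 1 = i + 2 := by ring
  rw [e1, e2]
  exact aux_adj (extStr n ω (i-1)) (extStr n ω i) (extStr n ω (i+1)) (extStr n ω (i+2))
    (extStr n ω (i+1+2)) h

lemma swap_lt {i : ℤ} (h : swapPair n ω i = true) :
    extStr n ω i < extStr n ω (i+1) := by
  rw [swapPair, decide_eq_true_eq] at h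
  rcases h with ⟨h, _⟩ | ⟨_, h1, h2⟩
  · exact h
  · rw [h1, h2]; decide

lemma swap_neg {i : ℤ} (h : i < 0) : swapPair n ω i = false := by
  rw [swapPair, decide_eq_false_iff_not]
  rintro (⟨h1, _⟩ | ⟨_, h1, _⟩)
  · rw [extStr_neg h] at h1
    exact absurd h1 (not_lt.mpr (Fin.le_last _))
  · rw [extStr_neg h] at h1; exact absurd h1 (by decide)

lemma swap_ge {i : ℤ} (h : (n:ℤ) - 1 ≤ i) : swapPair n ω i = false := by
  rw [swapPair, decide_eq_false_iff_not]
  have h1 : extStr n ω (i+1) = 0 := extStr_ge (by omega)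
  rintro (⟨h2, _⟩ | ⟨_, _, h2⟩)
  · rw [h1] at h2
    exact absurd h2 (Fin.not_lt_zero _)
  · rw [h1] at h2; exact absurd h2 (by decide)

/-- integer value of the extended string -/
def Ev (n : ℕ) (ω : Fin n → Fin 3) (i : ℤ) : ℤ := ((extStr n ω i : Fin 3) : ℤ)

/-- swap contribution -/
def Cv (n : ℕ) (ω : Fin n → Fin 3) (i : ℤ) : ℤ :=
  if swapPair n ω i then Ev n ω (i+1) - Ev n ω i else 0

lemma Cv_nonneg (i : ℤ) : 0 ≤ Cv n ω i := by
  rw [Cv]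
  split
  · rename_i h
    have := swap_lt h
    rw [Fin.lt_def] at this
    simp only [Ev]
    omega
  · exact le_refl 0

lemma Cv_pos {i : ℤ} (h : swapPair n ω i = true) : 1 ≤ Cv n ω i := by
  rw [Cv, if_pos h]
  have := swap_lt (ω := ω) h
  rw [Fin.lt_def] at this
  simp only [Ev]
  omega

lemma Zval (j : Fin n) :
    ((Zstep n ω j : Fin 3) : ℤ) = Ev n ω j + Cv n ω j - Cv n ω ((j:ℤ) - 1) := by
  rw [Zstep]
  by_cases hs : swapPair n ω (j:ℤ) = true
  · have h2 : swapPair n ω ((j:ℤ) - 1) = false := by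
      by_contra h
      have h' : swapPair n ω ((j:ℤ)-1) = true := by
        revert h; cases swapPair n ω ((j:ℤ)-1) <;> simp
      have := swap_not_adj h'
      rw [show (j:ℤ) - 1 + 1 = (j:ℤ) by ring] at this
      rw [this] at hs; exact absurd hs (by simp)
    rw [if_pos hs, Cv, Cv, if_pos hs, if_neg (by rw [h2]; simp)]
    simp only [Ev]
    ring
  · have hs' : swapPair n ω (j:ℤ) = false := by
      revert hs; cases swapPair n ω (j:ℤ) <;> simp
    rw [if_neg (by rw [hs']; simp)]
    by_cases h2 : swapPair n ω ((j:ℤ)-1) = true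
    · rw [if_pos h2, Cv, Cv, if_pos h2, if_neg (by rw [hs']; simp)]
      simp only [Ev]
      rw [show (j:ℤ) - 1 + 1 = (j:ℤ) by ring]
      ring
    · have h2' : swapPair n ω ((j:ℤ)-1) = false := by
        revert h2; cases swapPair n ω ((j:ℤ)-1) <;> simp
      rw [if_neg (by rw [h2']; simp), Cv, Cv, if_neg (by rw [hs']; simp),
        if_neg (by rw [h2']; simp)]
      rw [show Ev n ω (j:ℤ) = ((ω j : Fin 3) : ℤ) by rw [Ev, extStr_fin]]
      ring

lemma shiftSum (f : ℤ → ℤ) (m : ℕ) :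
    ∑ j ∈ Finset.range m, (j:ℤ) * f ((j:ℤ) - 1)
      = ∑ j ∈ Finset.range m, ((j:ℤ) + 1) * f j - (m:ℤ) * f ((m:ℤ) - 1) := by
  induction m with
  | zero => simp
  | succ m ih =>
    rw [Finset.sum_range_succ, Finset.sum_range_succ, ih]
    push_cast
    rw [show ((m:ℤ) + 1 - 1) = (m:ℤ) by ring]
    ring

/-- the potential -/
def Phi (n : ℕ) (ω : Fin n → Fin 3) : ℕ := ∑ j : Fin n, (j : ℕ) * ((ω j : Fin 3) : ℕ)

lemma Phi_decrease (h : Zstep n ω ≠ ω) : Phi n (Zstep n ω) < Phi n ω := by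
  have key : (Phi n (Zstep n ω) : ℤ) = (Phi n ω : ℤ) - ∑ j ∈ Finset.range n, Cv n ω j := by
    have e1 : (Phi n (Zstep n ω) : ℤ) = ∑ j : Fin n, (j:ℤ) * ((Zstep n ω j : Fin 3) : ℤ) := by
      rw [Phi]; push_cast; rfl
    have e2 : (Phi n ω : ℤ) = ∑ j : Fin n, (j:ℤ) * (Ev n ω j) := by
      rw [Phi]; push_cast
      refine Finset.sum_congr rfl fun j _ => ?_
      rw [Ev, extStr_fin]
    rw [e1, e2]
    have e3 : ∑ j : Fin n, (j:ℤ) * ((Zstep n ω j : Fin 3) : ℤ)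
        = ∑ j : Fin n, (j:ℤ) * (Ev n ω j + Cv n ω j - Cv n ω ((j:ℤ) - 1)) := by
      refine Finset.sum_congr rfl fun j _ => ?_
      rw [Zval]
    rw [e3]
    have e4 : ∀ g : ℤ → ℤ, ∑ j : Fin n, g (j:ℤ) = ∑ j ∈ Finset.range n, g (j:ℤ) := by
      intro g
      exact Fin.sum_univ_eq_sum_range (fun k => g (k:ℤ)) n
    rw [e4 (fun i => i * (Ev n ω i + Cv n ω i - Cv n ω (i - 1))),
      e4 (fun i => i * Ev n ω i)]
    have e5 : ∑ j ∈ Finset.range n, (j:ℤ) * (Ev n ω j + Cv n ω j - Cv n ω ((j:ℤ) - 1))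
        = ∑ j ∈ Finset.range n, (j:ℤ) * Ev n ω j + ∑ j ∈ Finset.range n, (j:ℤ) * Cv n ω j
          - ∑ j ∈ Finset.range n, (j:ℤ) * Cv n ω ((j:ℤ) - 1) := by
      rw [← Finset.sum_add_distrib, ← Finset.sum_sub_distrib]
      refine Finset.sum_congr rfl fun j _ => by ring
    rw [e5, shiftSum (Cv n ω) n]
    have e6 : Cv n ω ((n:ℤ) - 1) = 0 := by
      rw [Cv, if_neg]
      rw [swap_ge (le_refl _)]
      simp
    rw [e6]
    have e7 : ∑ j ∈ Finset.range n, ((j:ℤ) + 1) * Cv n ω j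
        = ∑ j ∈ Finset.range n, (j:ℤ) * Cv n ω j + ∑ j ∈ Finset.range n, Cv n ω j := by
      rw [← Finset.sum_add_distrib]
      refine Finset.sum_congr rfl fun j _ => by ring
    rw [e7]
    ring
  -- now show the sum is ≥ 1
  obtain ⟨j, hj⟩ : ∃ j : Fin n, Zstep n ω j ≠ ω j := by
    by_contra hc
    push_neg at hc
    exact h (funext hc)
  have hne : Cv n ω (j:ℤ) ≠ 0 ∨ Cv n ω ((j:ℤ) - 1) ≠ 0 := by
    by_contra hc
    push_neg at hc
    have := Zval (ω := ω) j
    rw [hc.1, hc.2] at this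
    apply hj
    have : ((Zstep n ω j : Fin 3) : ℤ) = ((ω j : Fin 3) : ℤ) := by
      rw [this, Ev, extStr_fin]; ring
    exact_mod_cast Fin.val_injective (by exact_mod_cast this)
  obtain ⟨k, hk1, hk2⟩ : ∃ k : ℕ, k < n ∧ 1 ≤ Cv n ω (k:ℤ) := by
    rcases hne with h1 | h1
    · refine ⟨j, j.isLt, Cv_pos ?_⟩
      by_contra hc
      rw [Cv, if_neg (by rw [show swapPair n ω (j:ℤ) = false by
        revert hc; cases swapPair n ω (j:ℤ) <;> simp]; simp)] at h1
      exact h1 rfl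
    · have hj0 : (j:ℤ) ≠ 0 := by
        intro h0
        rw [h0] at h1
        rw [Cv, if_neg (by rw [swap_neg (by norm_num)]; simp)] at h1
        exact h1 rfl
      have hj1 : 1 ≤ (j:ℕ) := by
        by_contra hc
        exact hj0 (by omega)
      refine ⟨(j:ℕ) - 1, by omega, ?_⟩
      have : (((j:ℕ) - 1 : ℕ) : ℤ) = (j:ℤ) - 1 := by omega
      rw [this]
      refine Cv_pos ?_
      by_contra hc
      rw [Cv, if_neg (by rw [show swapPair n ω ((j:ℤ)-1) = false by
        revert hc; cases swapPair n ω ((j:ℤ)-1) <;> simp]; simp)] at h1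
      exact h1 rfl
  have hsum : 1 ≤ ∑ j ∈ Finset.range n, Cv n ω j := by
    calc (1:ℤ) ≤ Cv n ω (k:ℤ) := hk2
    _ ≤ ∑ j ∈ Finset.range n, Cv n ω j := by
        refine Finset.single_le_sum (f := fun i : ℕ => Cv n ω (i:ℤ)) (fun i _ => Cv_nonneg i) ?_
        exact Finset.mem_range.mpr hk1
  omega


lemma exists_fixed (ω : Fin n → Fin 3) :
    ∃ k : ℕ, (Zstep n)^[k] ω = (Zstep n)^[k + 1] ω := by
  generalize hm : Phi n ω = m
  induction m using Nat.strong_induction_on generalizing ω with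
  | _ m ih =>
    by_cases hz : Zstep n ω = ω
    · exact ⟨0, by simp [hz]⟩
    · obtain ⟨k, hk⟩ := ih (Phi n (Zstep n ω)) (hm ▸ Phi_decrease hz) (Zstep n ω) rfl
      refine ⟨k + 1, ?_⟩
      rw [Function.iterate_succ_apply, Function.iterate_succ_apply, hk]

lemma fixed_noswap {σ : Fin n → Fin 3} (hσ : Zstep n σ = σ) (i : ℤ) :
    swapPair n σ i = false := by
  by_cases hr : 0 ≤ i ∧ i < (n:ℤ) - 1
  · by_contra hc
    have hs : swapPair n σ i = true := by
      revert hc; cases swapPair n σ i <;> simp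
    set j : Fin n := ⟨i.toNat, by omega⟩ with hj
    have hji : (j:ℤ) = i := by simp [hj]; omega
    have h1 : Zstep n σ j = extStr n σ (i + 1) := by
      rw [Zstep]
      rw [hji, if_pos hs]
    have h2 : extStr n σ i = σ j := by rw [← hji]; exact extStr_fin j
    have := swap_lt hs
    rw [← h1, hσ, ← h2] at this
    exact lt_irrefl _ this
  · rcases (by omega : i < 0 ∨ (n:ℤ) - 1 ≤ i) with h | h
    · exact swap_neg h
    · exact swap_ge h

lemma aux_chain : ∀ a b c : Fin 3, a < b → b < c → a = 0 ∧ b = 1 ∧ c = 2 := by decide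

lemma noswap_noninc {σ : Fin n → Fin 3} (hns : ∀ i : ℤ, swapPair n σ i = false)
    (i : ℤ) : extStr n σ (i + 1) ≤ extStr n σ i := by
  by_contra hc
  push_neg at hc
  have h1 := hns i
  rw [swapPair, decide_eq_false_iff_not] at h1
  by_cases hl : extStr n σ i ≤ extStr n σ (i - 1)
  · by_cases hrr : extStr n σ (i + 2) ≤ extStr n σ (i + 1)
    · exact h1 (Or.inl ⟨hc, hl, hrr⟩)
    · push_neg at hrr
      obtain ⟨e1, e2, e3⟩ := aux_chain _ _ _ hc hrr
      have h4 := hns (i + 1)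
      rw [swapPair, decide_eq_false_iff_not] at h4
      refine h4 (Or.inr ?_)
      rw [show i + 1 - 1 = i by ring, show i + 1 + 1 = i + 2 by ring]
      exact ⟨e1, e2, e3⟩
  · push_neg at hl
    obtain ⟨e1, e2, e3⟩ := aux_chain _ _ _ hl hc
    exact h1 (Or.inr ⟨e1, e2, e3⟩)

lemma noswap_anti {σ : Fin n → Fin 3} (hns : ∀ i : ℤ, swapPair n σ i = false)
    {i j : ℤ} (hij : i ≤ j) : extStr n σ j ≤ extStr n σ i := by
  obtain ⟨k, hk⟩ : ∃ k : ℕ, j = i + k := ⟨(j - i).toNat, by omega⟩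
  subst hk
  clear hij
  induction k with
  | zero => simp
  | succ k ih =>
    refine le_trans ?_ ih
    have := noswap_noninc hns (i + k)
    rw [show (i:ℤ) + (k:ℤ) + 1 = i + ((k:ℕ) + 1 : ℕ) by push_cast; ring] at this
    exact this

/-- For every `n` and every `ω ∈ {0,1,2}ⁿ`, some iterate of `Z` is a
fixed point of `Z` (so the stabilization time `T_n(ω) = min{k : Z^[k] ω = Z^[k+1] ω}` is
well defined as a minimum over a nonempty set), and the string reached at time `T_n(ω)`
is sorted in non-increasing order. -/
theorem stabilizes_and_sorted (n : ℕ) (ω : Fin n → Fin 3) :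
    (∃ k : ℕ, (Zstep n)^[k] ω = (Zstep n)^[k + 1] ω) ∧
      ∀ i j : Fin n, i ≤ j → (Zstep n)^[T3 n ω] ω j ≤ (Zstep n)^[T3 n ω] ω i := by
  classical
  refine ⟨exists_fixed ω, ?_⟩
  have hne : {k | (Zstep n)^[k] ω = (Zstep n)^[k + 1] ω}.Nonempty := exists_fixed ω
  have hmem := Nat.sInf_mem hne
  have hTs : T3 n ω = sInf {k | (Zstep n)^[k] ω = (Zstep n)^[k + 1] ω} := rfl
  rw [← hTs] at hmem
  set σ := (Zstep n)^[T3 n ω] ω with hσdef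
  have hfix : Zstep n σ = σ := by
    simp only [Set.mem_setOf_eq] at hmem
    have h : (Zstep n)^[T3 n ω + 1] ω = Zstep n σ := by
      rw [Function.iterate_succ_apply']
    rw [h] at hmem
    exact hmem.symm
  have hns : ∀ i : ℤ, swapPair n σ i = false := fixed_noswap hfix
  intro i j hij
  have h1 : σ j = extStr n σ (j:ℤ) := (extStr_fin j).symm
  have h2 : σ i = extStr n σ (i:ℤ) := (extStr_fin i).symm
  rw [h1, h2]
  exact noswap_anti hns (by exact_mod_cast hij)


end TASEP
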